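/- Let X and Y be nonempty subsets of A⁺. Then XY and YX are both bifix codes and alt-induced codes if and only if X and Y are bifix codes; and XY and YX are both maximal bifix codes, thin, and alt-induced codes if and only if X and Y are maximal bifix codes and thin. -/

import Mathlib

open List

/-- The (catenation) product `XY` of two languages. -/
def ProdL {A : Type*} (X Y : Set (List A)) : Set (List A) :=
  {z | ∃ x ∈ X, ∃ y ∈ Y, z = x ++ y}

/-- The product `XY` is unambiguous. -/
def Unamb {A : Type*} (X Y : Set (List A)) : Prop :=
  ∀ x₁ ∈ X, ∀ y₁ ∈ Y, ∀ x₂ ∈ X, ∀ y₂ ∈ Y,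
    x₁ ++ y₁ = x₂ ++ y₂ → x₁ = x₂ ∧ y₁ = y₂

/-- `X ⊆ A⁺` is a code: any equality of two (nonempty) factorizations over `X`
forces the factorizations to coincide. -/
def IsCode {A : Type*} (X : Set (List A)) : Prop :=
  ([] : List A) ∉ X ∧
  ∀ xs ys : List (List A), xs ≠ [] → ys ≠ [] →
    (∀ w ∈ xs, w ∈ X) → (∀ w ∈ ys, w ∈ X) → xs.flatten = ys.flatten → xs = ys

/-- `us` is an alternative factorization on `(X, Y)`: it has length at least 2,
its words lie in `X ∪ Y`, and consecutive words alternate between `X` and `Y`. -/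
def IsAltFact {A : Type*} (X Y : Set (List A)) (us : List (List A)) : Prop :=
  2 ≤ us.length ∧ (∀ w ∈ us, w ∈ X ∪ Y) ∧
  us.Chain' (fun u v => (u ∈ X → v ∈ Y) ∧ (u ∈ Y → v ∈ X))

/-- Two alternative factorizations are similar: they begin with words in the same
set (`X` or `Y`) and they end with words in the same set. -/
def SimilarFact {A : Type*} (X Y : Set (List A)) (us vs : List (List A)) : Prop :=
  (∀ u ∈ us.head?, ∀ v ∈ vs.head?, (u ∈ X ∧ v ∈ X) ∨ (u ∈ Y ∧ v ∈ Y)) ∧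
  (∀ u ∈ us.getLast?, ∀ v ∈ vs.getLast?, (u ∈ X ∧ v ∈ X) ∨ (u ∈ Y ∧ v ∈ Y))

/-- `(X, Y)` is an alternative code: `X, Y` are nonempty subsets of `A⁺` and no
word admits two different similar alternative factorizations on `(X, Y)`. -/
def IsAltCode {A : Type*} (X Y : Set (List A)) : Prop :=
  X.Nonempty ∧ Y.Nonempty ∧ ([] : List A) ∉ X ∧ ([] : List A) ∉ Y ∧
  ∀ us vs : List (List A), IsAltFact X Y us → IsAltFact X Y vs →
    SimilarFact X Y us vs → us.flatten = vs.flatten → us = vs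

/-- `Z` is an alt-induced code: `Z = XY` for some alternative code `(X, Y)`. -/
def IsAltInduced {A : Type*} (Z : Set (List A)) : Prop :=
  ∃ X Y : Set (List A), IsAltCode X Y ∧ Z = ProdL X Y

/-- `X ⊆ A⁺` is a prefix code: no word of `X` is a proper prefix of another word of `X`. -/
def IsPrefixCode {A : Type*} (X : Set (List A)) : Prop :=
  ([] : List A) ∉ X ∧ ∀ u ∈ X, ∀ v ∈ X, u <+: v → u = v

/-- `X ⊆ A⁺` is a suffix code: no word of `X` is a proper suffix of another word of `X`. -/
def IsSuffixCode {A : Type*} (X : Set (List A)) : Prop :=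
  ([] : List A) ∉ X ∧ ∀ u ∈ X, ∀ v ∈ X, u <:+ v → u = v

/-- A bifix code is both a prefix code and a suffix code. -/
def IsBifixCode {A : Type*} (X : Set (List A)) : Prop :=
  IsPrefixCode X ∧ IsSuffixCode X

/-- A maximal prefix code: a prefix code not properly contained in another prefix code. -/
def IsMaximalPrefixCode {A : Type*} (X : Set (List A)) : Prop :=
  IsPrefixCode X ∧ ∀ X' : Set (List A), IsPrefixCode X' → X ⊆ X' → X = X'

/-- A maximal suffix code: a suffix code not properly contained in another suffix code. -/
def IsMaximalSuffixCode {A : Type*} (X : Set (List A)) : Prop :=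
  IsSuffixCode X ∧ ∀ X' : Set (List A), IsSuffixCode X' → X ⊆ X' → X = X'

/-- A maximal bifix code: a bifix code not properly contained in another bifix code. -/
def IsMaximalBifixCode {A : Type*} (X : Set (List A)) : Prop :=
  IsBifixCode X ∧ ∀ X' : Set (List A), IsBifixCode X' → X ⊆ X' → X = X'

/-- `X` is thin: some word `w` is not a factor (infix) of any word of `X`. -/
def IsThin {A : Type*} (X : Set (List A)) : Prop :=
  ∃ w : List A, ∀ u v : List A, u ++ w ++ v ∉ X

/-- The left quotient `X⁻¹Y = {u | ∃ x ∈ X, xu ∈ Y}`. -/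
def lQuot {A : Type*} (X Y : Set (List A)) : Set (List A) :=
  {u | ∃ x ∈ X, x ++ u ∈ Y}

/-- The right quotient `XY⁻¹ = {u | ∃ y ∈ Y, uy ∈ X}`. -/
def rQuot {A : Type*} (X Y : Set (List A)) : Set (List A) :=
  {u | ∃ y ∈ Y, u ++ y ∈ X}

/-- `(X, Y)` is a strong alternative code: an alternative code with
`X⁻¹(XY) ⊆ Y` and `(XY)Y⁻¹ ⊆ X`. -/
def IsStrongAltCode {A : Type*} (X Y : Set (List A)) : Prop :=
  IsAltCode X Y ∧ lQuot X (ProdL X Y) ⊆ Y ∧ rQuot (ProdL X Y) Y ⊆ X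

/-- `Z` is a strong alt-induced code: `Z = XY` for some strong alternative code `(X, Y)`. -/
def IsStrongAltInduced {A : Type*} (Z : Set (List A)) : Prop :=
  ∃ X Y : Set (List A), IsStrongAltCode X Y ∧ Z = ProdL X Y

/-- `Z_a`: the set of words of `Z` beginning with the letter `a`. -/
def Za {A : Type*} (a : A) (Z : Set (List A)) : Set (List A) :=
  {w ∈ Z | w.head? = some a}

/-- A finite code `Z` is of standard form: all its words have length at least 2,
not all of its words begin with the same letter, and not all of its words end
with the same letter. -/
def StandardForm {A : Type*} (Z : Set (List A)) : Prop :=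
  (∀ w ∈ Z, 2 ≤ w.length) ∧
  ¬ (∃ a : A, ∀ w ∈ Z, w.head? = some a) ∧
  ¬ (∃ a : A, ∀ w ∈ Z, w.getLast? = some a)

namespace S12
variable {A : Type*} {X Y : Set (List A)}

variable {A : Type*} {X Y : Set (List A)}

lemma ne_nil_of_prefixcode (h : IsPrefixCode X) {x : List A} (hx : x ∈ X) : x ≠ [] := by
  rintro rfl; exact h.1 hx

lemma prefixcode_prod (hX : IsPrefixCode X) (hY : IsPrefixCode Y) :
    IsPrefixCode (ProdL X Y) := by
  constructor
  · rintro ⟨x, hx, y, hy, hxy⟩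
    exact hX.1 (by simpa using (List.append_eq_nil_iff.mp hxy.symm).1 ▸ hx)
  · rintro u ⟨x1, hx1, y1, hy1, rfl⟩ v ⟨x2, hx2, y2, hy2, rfl⟩ hpre
    have h1 : x1 <+: x2 ++ y2 := (prefix_append x1 y1).trans hpre
    have h2 : x2 <+: x2 ++ y2 := prefix_append x2 y2
    have hx12 : x1 = x2 := by
      rcases prefix_or_prefix_of_prefix h1 h2 with h | h
      · exact hX.2 x1 hx1 x2 hx2 h
      · exact (hX.2 x2 hx2 x1 hx1 h).symm
    subst hx12
    have : y1 <+: y2 := (prefix_append_right_inj x1).mp hpre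
    rw [hY.2 y1 hy1 y2 hy2 this]

lemma suffixcode_prod (hX : IsSuffixCode X) (hY : IsSuffixCode Y) :
    IsSuffixCode (ProdL X Y) := by
  constructor
  · rintro ⟨x, hx, y, hy, hxy⟩
    exact hY.1 (by simpa using (List.append_eq_nil_iff.mp hxy.symm).2 ▸ hy)
  · rintro u ⟨x1, hx1, y1, hy1, rfl⟩ v ⟨x2, hx2, y2, hy2, rfl⟩ hsuf
    have h1 : y1 <:+ x2 ++ y2 := (suffix_append x1 y1).trans hsuf
    have h2 : y2 <:+ x2 ++ y2 := suffix_append x2 y2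
    have hy12 : y1 = y2 := by
      rcases suffix_or_suffix_of_suffix h1 h2 with h | h
      · exact hY.2 y1 hy1 y2 hy2 h
      · exact (hY.2 y2 hy2 y1 hy1 h).symm
    subst hy12
    have : x1 <:+ x2 := by
      rcases hsuf with ⟨t, ht⟩
      exact ⟨t, by have := ht; rwa [← append_assoc, append_cancel_right_eq] at this⟩
    rw [hX.2 x1 hx1 x2 hx2 this]


variable {A : Type*} {X Y : Set (List A)}

/-- alternating list with first element in `side b` -/
def Alt (X Y : Set (List A)) : Bool → List (List A) → Prop
  | _, [] => True
  | b, (w :: l) => w ∈ (if b then X else Y) ∧ Alt X Y (!b) l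

lemma alt_of_chain : ∀ (l : List (List A)) (b : Bool),
    (∀ w ∈ l, w ∈ X ∪ Y) →
    l.Chain' (fun u v => (u ∈ X → v ∈ Y) ∧ (u ∈ Y → v ∈ X)) →
    (∀ w, l.head? = some w → w ∈ (if b then X else Y)) → Alt X Y b l := by
  intro l
  induction l with
  | nil => intro b _ _ _; trivial
  | cons w l ih =>
    intro b hmem hch hh
    refine ⟨hh w rfl, ?_⟩
    apply ih (!b) (fun u hu => hmem u (mem_cons_of_mem _ hu)) hch.tail
    intro w' hw'
    cases l with
    | nil => simp at hw'
    | cons w2 l2 =>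
      have hR := (List.isChain_cons_cons.mp hch).1
      have hw2 : w2 = w' := by simpa using hw'
      subst hw2
      have hwb : w ∈ (if b then X else Y) := hh w rfl
      cases b with
      | true => simpa using hR.1 (by simpa using hwb)
      | false => simpa using hR.2 (by simpa using hwb)

lemma alt_unique (hX : IsPrefixCode X) (hY : IsPrefixCode Y) :
    ∀ (us vs : List (List A)) (b : Bool), Alt X Y b us → Alt X Y b vs →
      us.flatten = vs.flatten → us = vs := by
  intro us
  induction us with
  | nil =>
    intro vs b _ hv hf
    cases vs with
    | nil => rfl
    | cons v vs' =>
      exfalso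
      have hvne : v ≠ [] := by
        intro h; subst h
        cases b with
        | true => exact hX.1 (by simpa using hv.1)
        | false => exact hY.1 (by simpa using hv.1)
      simp only [flatten_nil, flatten_cons] at hf
      exact hvne (List.append_eq_nil_iff.mp hf.symm).1
  | cons u us' ih =>
    intro vs b hu hv hf
    cases vs with
    | nil =>
      exfalso
      have hune : u ≠ [] := by
        intro h; subst h
        cases b with
        | true => exact hX.1 (by simpa using hu.1)
        | false => exact hY.1 (by simpa using hu.1)
      simp only [flatten_nil, flatten_cons] at hf
      exact hune (List.append_eq_nil_iff.mp hf).1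
    | cons v vs' =>
      simp only [flatten_cons] at hf
      have h1 : u <+: v ++ vs'.flatten := hf ▸ prefix_append u us'.flatten
      have h2 : v <+: v ++ vs'.flatten := prefix_append v vs'.flatten
      have huv : u = v := by
        cases b with
        | true =>
          rcases prefix_or_prefix_of_prefix h1 h2 with h | h
          · exact hX.2 u (by simpa using hu.1) v (by simpa using hv.1) h
          · exact (hX.2 v (by simpa using hv.1) u (by simpa using hu.1) h).symm
        | false =>
          rcases prefix_or_prefix_of_prefix h1 h2 with h | h
          · exact hY.2 u (by simpa using hu.1) v (by simpa using hv.1) h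
          · exact (hY.2 v (by simpa using hv.1) u (by simpa using hu.1) h).symm
      subst huv
      have hf' : us'.flatten = vs'.flatten := by
        exact append_cancel_left hf
      rw [ih vs' (!b) hu.2 hv.2 hf']

lemma altcode_of_prefixcodes (hX : IsPrefixCode X) (hY : IsPrefixCode Y)
    (hXne : X.Nonempty) (hYne : Y.Nonempty) : IsAltCode X Y := by
  refine ⟨hXne, hYne, hX.1, hY.1, ?_⟩
  intro us vs hfu hfv hsim heq
  rcases us with _ | ⟨u, us'⟩
  · exact absurd hfu.1 (by simp)
  rcases vs with _ | ⟨v, vs'⟩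
  · exact absurd hfv.1 (by simp)
  have hsim1 := hsim.1 u (by simp) v (by simp)
  rcases hsim1 with ⟨huX, hvX⟩ | ⟨huY, hvY⟩
  · exact alt_unique hX hY _ _ true
      (alt_of_chain _ true hfu.2.1 hfu.2.2 (by intro w hw; simp at hw; subst hw; simpa using huX))
      (alt_of_chain _ true hfv.2.1 hfv.2.2 (by intro w hw; simp at hw; subst hw; simpa using hvX))
      heq
  · exact alt_unique hX hY _ _ false
      (alt_of_chain _ false hfu.2.1 hfu.2.2 (by intro w hw; simp at hw; subst hw; simpa using huY))
      (alt_of_chain _ false hfv.2.1 hfv.2.2 (by intro w hw; simp at hw; subst hw; simpa using hvY))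
      heq


variable {A : Type*} {X : Set (List A)} {d e : List A}

/-- `w ∈ X*` -/
def Star (X : Set (List A)) (w : List A) : Prop :=
  ∃ l : List (List A), (∀ u ∈ l, u ∈ X) ∧ l.flatten = w

/-- `w ∈ X⁺` -/
def Plus (X : Set (List A)) (w : List A) : Prop :=
  ∃ l : List (List A), l ≠ [] ∧ (∀ u ∈ l, u ∈ X) ∧ l.flatten = w

lemma Plus.star {w : List A} (h : Plus X w) : Star X w := ⟨h.choose, h.choose_spec.2⟩

lemma star_plus {w : List A} (h : Star X w) (hw : w ≠ []) : Plus X w := by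
  obtain ⟨l, hl, rfl⟩ := h
  exact ⟨l, by rintro rfl; simp at hw, hl, rfl⟩

/-- right-unitarity of `X*` for a prefix code -/
lemma star_unitary (hX : IsPrefixCode X) {u v : List A}
    (hu : Star X u) (huv : Star X (u ++ v)) : Star X v := by
  obtain ⟨l, hl, rfl⟩ := hu
  induction l generalizing v with
  | nil => simpa using huv
  | cons x l ih =>
    obtain ⟨m, hm, hmf⟩ := huv
    cases m with
    | nil =>
      exfalso
      have : x ≠ [] := by rintro rfl; exact hX.1 (hl [] (by simp))
      simp only [flatten_nil, flatten_cons, append_assoc] at hmf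
      rw [eq_comm, List.append_eq_nil_iff] at hmf
      exact this hmf.1
    | cons y m' =>
      have hx : x ∈ X := hl x (by simp)
      have hy : y ∈ X := hm y (by simp)
      have hflat : y ++ m'.flatten = x ++ (l.flatten ++ v) := by
        simpa [append_assoc] using hmf
      have h1 : x <+: y ++ m'.flatten := by rw [hflat]; exact prefix_append _ _
      have h2 : y <+: y ++ m'.flatten := prefix_append _ _
      have hxy : x = y := by
        rcases prefix_or_prefix_of_prefix h1 h2 with h | h
        · exact hX.2 x hx y hy h
        · exact (hX.2 y hy x hx h).symm
      subst hxy
      have : m'.flatten = l.flatten ++ v := append_cancel_left hflat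
      exact ih (fun u hu => hl u (mem_cons_of_mem _ hu)) ⟨m', fun u hu => hm u (mem_cons_of_mem _ hu), this⟩

/-- `e^m` -/
def pow (e : List A) (m : ℕ) : List A := (List.replicate m e).flatten

lemma pow_succ' (e : List A) (m : ℕ) : pow e (m + 1) = e ++ pow e m := by
  simp [pow, List.replicate_succ]

lemma pow_add' (e : List A) (a b : ℕ) : pow e (a + b) = pow e a ++ pow e b := by
  unfold pow
  rw [List.replicate_add, List.flatten_append]

lemma pow_ne_nil (e : List A) (he : e ≠ []) (m : ℕ) (hm : 1 ≤ m) : pow e m ≠ [] := by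
  obtain ⟨m, rfl⟩ := Nat.exists_eq_add_of_le hm
  rw [add_comm, pow_succ']
  intro h
  exact he (List.append_eq_nil_iff.mp h).1

/-- The key descent step. -/
lemma step (hthin : ∀ x ∈ X, ¬ d <:+: x) (hd : d <:+: e) (hdne : d ≠ []) :
    ∀ (l : List (List A)) (v : List A) (m : ℕ), (∀ u ∈ l, u ∈ X) →
      l.flatten = v ++ pow e (m + 1) →
      ∃ c, 0 < c ∧ c < e.length ∧ Plus X (e.drop c ++ pow e m) := by
  have hene : e ≠ [] := by rintro rfl; exact hdne (List.eq_nil_of_infix_nil hd)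
  intro l
  induction l with
  | nil =>
    intro v m _ hf
    exfalso
    simp only [flatten_nil] at hf
    exact pow_ne_nil e hene (m+1) (by omega) (List.append_eq_nil_iff.mp hf.symm).2
  | cons x l ih =>
    intro v m hl hf
    have hx : x ∈ X := hl x (by simp)
    simp only [flatten_cons] at hf
    have hxpre : x <+: v ++ pow e (m + 1) := by rw [← hf]; exact prefix_append _ _
    have hvpre : v <+: v ++ pow e (m + 1) := prefix_append _ _
    rcases le_or_gt x.length v.length with hle | hlt
    · -- x is a prefix of v : recurse
      obtain ⟨v', rfl⟩ := prefix_of_prefix_length_le hxpre hvpre hle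
      refine ih (fun u hu => hl u (mem_cons_of_mem _ hu)) (v := v') (m := m) ?_
      rw [append_assoc] at hf
      exact append_cancel_left hf
    · -- v is a proper prefix of x
      obtain ⟨p, rfl⟩ := prefix_of_prefix_length_le hvpre hxpre hlt.le
      have hpne : p ≠ [] := by rintro rfl; simp at hlt
      have hppre : p <+: pow e (m + 1) := by
        rw [append_assoc] at hf
        have := append_cancel_left hf  -- p ++ l.flatten = pow e (m+1)
        exact ⟨l.flatten, this⟩
      have hepre : e <+: pow e (m + 1) := by
        rw [pow_succ']; exact prefix_append _ _
      rcases le_or_gt e.length p.length with hle2 | hlt2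
      · -- e would be an infix of x; impossible
        exfalso
        obtain ⟨q, hq⟩ := prefix_of_prefix_length_le hepre hppre hle2
        exact hthin _ hx (hd.trans ⟨v, q, by rw [← hq]; simp [append_assoc]⟩)
      · -- p is a proper prefix of e : found the offset
        obtain ⟨r, hr⟩ := prefix_of_prefix_length_le hppre hepre hlt2.le
        have hrne : r ≠ [] := by
          rintro rfl
          rw [append_nil] at hr
          subst hr; simp at hlt2
        refine ⟨p.length, by simpa [length_pos_iff] using hpne, ?_, ?_⟩
        · rw [← hr]; simp [length_append, length_pos_iff.mpr hrne]
        · have hdrop : e.drop p.length = r := by rw [← hr, List.drop_left]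
          rw [hdrop]
          have hfl : l.flatten = r ++ pow e m := by
            rw [append_assoc] at hf
            have h2 := append_cancel_left hf
            have h3 : pow e (m+1) = p ++ (r ++ pow e m) := by
              rw [pow_succ', ← hr, append_assoc]
            rw [h3] at h2
            exact append_cancel_left h2
          refine ⟨l, ?_, fun u hu => hl u (mem_cons_of_mem _ hu), hfl⟩
          rintro rfl
          simp only [flatten_nil] at hfl
          exact hrne (List.append_eq_nil_iff.mp hfl.symm).1

lemma lc_of_bs (hXe : ([] : List A) ∉ X)
    (hBs : ∀ w : List A, d <:+: w → ∃ x ∈ X, x <:+ w) :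
    ∀ w : List A, w ≠ [] → ∃ t, Plus X (t ++ w) := by
  suffices H : ∀ n : ℕ, ∀ w : List A, w.length ≤ n → w ≠ [] → ∃ t, Plus X (t ++ w) by
    exact fun w hw => H w.length w le_rfl hw
  intro n
  induction n with
  | zero => intro w hw hne; exfalso; exact hne (List.eq_nil_of_length_eq_zero (by omega))
  | succ n ih =>
    intro w hw hne
    obtain ⟨x, hx, hsuf⟩ := hBs (d ++ w) ⟨[], w, by simp⟩
    rcases le_or_gt x.length w.length with hle | hlt
    · have hxw : x <:+ w := suffix_of_suffix_length_le hsuf (suffix_append d w) hle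
      obtain ⟨w', rfl⟩ := hxw
      by_cases hw' : w' = []
      · subst hw'
        exact ⟨[], ⟨[x], by simp, by simpa, by simp⟩⟩
      · have hlen : w'.length ≤ n := by
          have : x ≠ [] := by rintro rfl; exact hXe hx
          have := length_pos_iff.mpr this
          simp only [length_append] at hw
          omega
        obtain ⟨t, l, lne, hl, hfl⟩ := ih w' hlen hw'
        refine ⟨t, l ++ [x], by simp, ?_, ?_⟩
        · intro u hu
          rcases mem_append.mp hu with h | h
          · exact hl u h
          · simpa using (by simpa using h) ▸ hx
        · rw [flatten_append, hfl]; simp [append_assoc]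
    · have hwx : w <:+ x := suffix_of_suffix_length_le (suffix_append d w) hsuf hlt.le
      obtain ⟨t, rfl⟩ := hwx
      exact ⟨t, ⟨[t ++ w], by simp, by simpa, by simp⟩⟩

lemma bp_of_lc (hX : IsPrefixCode X) (hthin : ∀ x ∈ X, ¬ d <:+: x) (hdne : d ≠ [])
    (hLC : ∀ w : List A, w ≠ [] → ∃ t, Plus X (t ++ w)) :
    ∀ e : List A, d <:+: e → ∃ x ∈ X, x <+: e := by
  intro e hd
  by_contra hcon
  push_neg at hcon
  have hene : e ≠ [] := by rintro rfl; exact hdne (List.eq_nil_of_infix_nil hd)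
  have helen : 1 ≤ e.length := length_pos_iff.mpr hene
  -- iterated descent
  have hQ : ∀ j : ℕ, j ≤ e.length →
      ∃ c, 0 < c ∧ c < e.length ∧ Plus X (e.drop c ++ pow e (e.length - j)) := by
    intro j
    induction j with
    | zero =>
      intro _
      obtain ⟨t, l, lne, hl, hfl⟩ := hLC (pow e (e.length + 1)) (pow_ne_nil e hene _ (by omega))
      simpa using step hthin hd hdne l t e.length hl hfl
    | succ j ihj =>
      intro hj
      obtain ⟨c, hc1, hc2, l, lne, hl, hfl⟩ := ihj (by omega)
      have hsub : e.length - j = (e.length - (j + 1)) + 1 := by omega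
      rw [hsub] at hfl
      exact step hthin hd hdne l (e.drop c) (e.length - (j + 1)) hl hfl
  have hfn : ∀ j : Fin (e.length + 1), ∃ c, 0 < c ∧ c < e.length ∧
      Plus X (e.drop c ++ pow e (e.length - j.1)) := fun j => hQ j.1 (by omega)
  let f : Fin (e.length + 1) → Fin e.length :=
    fun j => ⟨(hfn j).choose, (hfn j).choose_spec.2.1⟩
  obtain ⟨j, j', hne, hfeq⟩ := Fintype.exists_ne_map_eq_of_card_lt f (by simp)
  -- wlog j < j'
  have key : ∀ a b : Fin (e.length + 1), a < b → f a = f b → False := by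
    intro a b hab hfab
    set c := (hfn a).choose with hc
    have hPa := (hfn a).choose_spec.2.2
    have hPb := (hfn b).choose_spec.2.2
    have hcb : (hfn b).choose = c := by
      have := congrArg Fin.val hfab
      simpa [f] using this.symm
    rw [hcb] at hPb
    have hexp : e.length - a.1 = (e.length - b.1) + (b.1 - a.1) := by omega
    have hsplit : e.drop c ++ pow e (e.length - a.1)
        = (e.drop c ++ pow e (e.length - b.1)) ++ pow e (b.1 - a.1) := by
      rw [hexp, pow_add', append_assoc]
    have hstar : Star X (pow e (b.1 - a.1)) := by
      apply star_unitary hX hPb.star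
      rw [← hsplit]; exact hPa.star
    have hbne : 1 ≤ b.1 - a.1 := by
      have := Fin.lt_iff_val_lt_val.mp hab; omega
    obtain ⟨l, lne, hl, hfl⟩ := star_plus hstar (pow_ne_nil e hene _ hbne)
    cases l with
    | nil => exact lne rfl
    | cons x l' =>
      have hx : x ∈ X := hl x (by simp)
      have hxpre : x <+: pow e (b.1 - a.1) := ⟨l'.flatten, by simpa using hfl⟩
      have hepre : e <+: pow e (b.1 - a.1) := by
        obtain ⟨k, hk⟩ := Nat.exists_eq_add_of_le hbne
        rw [hk, add_comm, pow_succ']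
        exact prefix_append _ _
      rcases le_or_gt x.length e.length with hle | hlt
      · exact hcon x hx (prefix_of_prefix_length_le hxpre hepre hle)
      · obtain ⟨q, hq⟩ := prefix_of_prefix_length_le hepre hxpre hlt.le
        exact hthin x hx (hd.trans ⟨[], q, by simpa using hq⟩)
  rcases hne.lt_or_gt with h | h
  · exact key j j' h hfeq
  · exact key j' j h hfeq.symm

lemma infix_of_prefix {u v : List A} (h : u <+: v) : u <:+: v := h.isInfix

lemma bp_or_bs (hmax : IsMaximalBifixCode X) (hthin : ∀ x ∈ X, ¬ d <:+: x)
    (hdne : d ≠ []) :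
    (∀ e : List A, d <:+: e → ∃ x ∈ X, x <+: e) ∨
    (∀ e : List A, d <:+: e → ∃ x ∈ X, x <:+ e) := by
  by_contra hcon
  push_neg at hcon
  obtain ⟨⟨ep, hdp, hp⟩, ⟨es, hds, hs⟩⟩ := hcon
  have hpne : ep ≠ [] := by rintro rfl; exact hdne (List.eq_nil_of_infix_nil hdp)
  have hsne : es ≠ [] := by rintro rfl; exact hdne (List.eq_nil_of_infix_nil hds)
  set W := ep ++ es with hW
  have hdW : d <:+: W := hdp.trans (prefix_append ep es).isInfix
  have hWX : W ∉ X := fun h => hthin W h hdW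
  have hbifix : IsBifixCode (insert W X) := by
    constructor
    · constructor
      · intro h
        rcases Set.mem_insert_iff.mp h with h | h
        · exact hpne (List.append_eq_nil_iff.mp h.symm).1
        · exact hmax.1.1.1 h
      · intro u hu v hv hpre
        rcases Set.mem_insert_iff.mp hu with rfl | hu <;>
          rcases Set.mem_insert_iff.mp hv with rfl | hv
        · rfl
        · exact absurd (hdp.trans ((prefix_append ep es).trans hpre).isInfix) (hthin v hv)
        · exfalso
          rcases le_or_gt u.length ep.length with hle | hlt
          · exact hp u hu (prefix_of_prefix_length_le hpre (prefix_append ep es) hle)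
          · have := prefix_of_prefix_length_le (prefix_append ep es) hpre hlt.le
            exact hthin u hu (hdp.trans this.isInfix)
        · exact hmax.1.1.2 u hu v hv hpre
    · constructor
      · intro h
        rcases Set.mem_insert_iff.mp h with h | h
        · exact hsne (List.append_eq_nil_iff.mp h.symm).2
        · exact hmax.1.2.1 h
      · intro u hu v hv hsuf
        rcases Set.mem_insert_iff.mp hu with rfl | hu <;>
          rcases Set.mem_insert_iff.mp hv with rfl | hv
        · rfl
        · exact absurd (hds.trans ((suffix_append ep es).trans hsuf).isInfix) (hthin v hv)
        · exfalso
          rcases le_or_gt u.length es.length with hle | hlt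
          · exact hs u hu (suffix_of_suffix_length_le hsuf (suffix_append ep es) hle)
          · have := suffix_of_suffix_length_le (suffix_append ep es) hsuf hlt.le
            exact hthin u hu (hds.trans this.isInfix)
        · exact hmax.1.2.2 u hu v hv hsuf
  have := hmax.2 (insert W X) hbifix (Set.subset_insert _ _)
  exact hWX (this ▸ Set.mem_insert W X)

lemma thin_witness (hthin : IsThin X) (hne : X.Nonempty) :
    ∃ d : List A, d ≠ [] ∧ ∀ x ∈ X, ¬ d <:+: x := by
  obtain ⟨d, hd⟩ := hthin
  refine ⟨d, ?_, ?_⟩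
  · rintro rfl
    obtain ⟨x, hx⟩ := hne
    exact hd x [] (by simpa using hx)
  · rintro x hx ⟨s, t, rfl⟩
    exact hd s t hx

lemma maxpref_of_thin_maxbifix (hmax : IsMaximalBifixCode X) (hthin : IsThin X)
    (hne : X.Nonempty) : IsMaximalPrefixCode X := by
  obtain ⟨d, hdne, hd⟩ := thin_witness hthin hne
  have hbp : ∀ e : List A, d <:+: e → ∃ x ∈ X, x <+: e := by
    rcases bp_or_bs hmax hd hdne with h | h
    · exact h
    · exact bp_of_lc hmax.1.1 hd hdne (lc_of_bs hmax.1.1.1 h)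
  refine ⟨hmax.1.1, ?_⟩
  intro Z hZ hsub
  refine Set.Subset.antisymm hsub ?_
  intro z hz
  obtain ⟨x, hx, hpre⟩ := hbp (z ++ d) ⟨z, [], by simp⟩
  rcases le_or_gt x.length z.length with hle | hlt
  · have hxz : x <+: z := prefix_of_prefix_length_le hpre (prefix_append z d) hle
    rwa [← hZ.2 x (hsub hx) z hz hxz]
  · have hzx : z <+: x := prefix_of_prefix_length_le (prefix_append z d) hpre hlt.le
    rwa [hZ.2 z hz x (hsub hx) hzx]

lemma comparable_of_maxpref (hmax : IsMaximalPrefixCode X) (hne : X.Nonempty) :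
    ∀ w : List A, ∃ x ∈ X, x <+: w ∨ w <+: x := by
  intro w
  by_contra hcon
  push_neg at hcon
  have hwX : w ∉ X := fun h => (hcon w h).1 (prefix_refl w)
  have hwne : w ≠ [] := by
    rintro rfl
    obtain ⟨x, hx⟩ := hne
    exact (hcon x hx).2 (nil_prefix)
  have hpc : IsPrefixCode (insert w X) := by
    constructor
    · intro h
      rcases Set.mem_insert_iff.mp h with h | h
      · exact hwne h.symm
      · exact hmax.1.1 h
    · intro u hu v hv hpre
      rcases Set.mem_insert_iff.mp hu with h1 | h1 <;>
        rcases Set.mem_insert_iff.mp hv with h2 | h2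
      · rw [h1, h2]
      · subst h1; exact absurd hpre (hcon v h2).2
      · subst h2; exact absurd hpre (hcon u h1).1
      · exact hmax.1.2 u h1 v h2 hpre
  have := hmax.2 (insert w X) hpc (Set.subset_insert _ _)
  exact hwX (this ▸ Set.mem_insert w X)

variable {A : Type*} {X Y : Set (List A)}


lemma maxpref_prod (hX : IsMaximalPrefixCode X) (hY : IsMaximalPrefixCode Y)
    (hXne : X.Nonempty) (hYne : Y.Nonempty) : IsMaximalPrefixCode (ProdL X Y) := by
  refine ⟨prefixcode_prod hX.1 hY.1, ?_⟩
  intro Z hZ hsub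
  refine Set.Subset.antisymm hsub ?_
  intro z hz
  obtain ⟨x, hx, hcx⟩ := comparable_of_maxpref hX hXne z
  rcases hcx with hxz | hzx
  · obtain ⟨z', rfl⟩ := hxz
    obtain ⟨y, hy, hcy⟩ := comparable_of_maxpref hY hYne z'
    rcases hcy with hyz | hzy
    · -- x ++ y <+: z, both in Z
      have hmem : x ++ y ∈ ProdL X Y := ⟨x, hx, y, hy, rfl⟩
      have hpre : x ++ y <+: x ++ z' := by
        rw [prefix_append_right_inj]; exact hyz
      have := hZ.2 (x ++ y) (hsub hmem) (x ++ z') hz hpre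
      rw [← this]; exact hmem
    · have hmem : x ++ y ∈ ProdL X Y := ⟨x, hx, y, hy, rfl⟩
      have hpre : x ++ z' <+: x ++ y := by
        rw [prefix_append_right_inj]; exact hzy
      have := hZ.2 (x ++ z') hz (x ++ y) (hsub hmem) hpre
      rw [this]; exact hmem
  · obtain ⟨y, hy⟩ := hYne
    have hmem : x ++ y ∈ ProdL X Y := ⟨x, hx, y, hy, rfl⟩
    have hpre : z <+: x ++ y := hzx.trans (prefix_append x y)
    have := hZ.2 z hz (x ++ y) (hsub hmem) hpre
    rw [this]; exact hmem

lemma thin_prod (hX : IsThin X) (hY : IsThin Y) (hXne : X.Nonempty) (hYne : Y.Nonempty) :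
    IsThin (ProdL X Y) := by
  obtain ⟨dX, hdX⟩ := hX
  obtain ⟨dY, hdY⟩ := hY
  refine ⟨dX ++ dY, ?_⟩
  rintro u v ⟨x, hx, y, hy, hxy⟩
  -- x ++ y = u ++ (dX ++ dY) ++ v
  have h : x ++ y = (u ++ dX) ++ (dY ++ v) := by
    rw [← hxy]; simp [append_assoc]
  rcases List.append_eq_append_iff.mp h with ⟨a, ha1, ha2⟩ | ⟨c, hc1, hc2⟩
  · -- u ++ dX = x ++ a, y = a ++ (dY ++ v)
    exact hdY a v (by rw [append_assoc, ← ha2]; exact hy)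
  · -- x = (u ++ dX) ++ c, dY ++ v = c ++ y
    exact hdX u c (by rw [← hc1]; exact hx)

lemma thin_left_of_prod (h : IsThin (ProdL X Y)) (hYne : Y.Nonempty) : IsThin X := by
  obtain ⟨w, hw⟩ := h
  obtain ⟨y, hy⟩ := hYne
  refine ⟨w, fun u v hin => ?_⟩
  exact hw u (v ++ y) (by
    refine ⟨u ++ w ++ v, hin, y, hy, by simp [append_assoc]⟩)

lemma thin_right_of_prod (h : IsThin (ProdL X Y)) (hXne : X.Nonempty) : IsThin Y := by
  obtain ⟨w, hw⟩ := h
  obtain ⟨x, hx⟩ := hXne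
  refine ⟨w, fun u v hin => ?_⟩
  exact hw (x ++ u) v (by
    refine ⟨x, hx, u ++ w ++ v, hin, by simp [append_assoc]⟩)


lemma prod_sub {X X' Y : Set (List A)} (h : X ⊆ X') : ProdL X Y ⊆ ProdL X' Y := by
  rintro z ⟨x, hx, y, hy, rfl⟩; exact ⟨x, h hx, y, hy, rfl⟩

lemma prod_sub_right {X Y Y' : Set (List A)} (h : Y ⊆ Y') : ProdL X Y ⊆ ProdL X Y' := by
  rintro z ⟨x, hx, y, hy, rfl⟩; exact ⟨x, hx, y, h hy, rfl⟩

lemma max_left_transfer (hmaxXY : IsMaximalBifixCode (ProdL X Y))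
    (hXb : IsBifixCode X) (hYb : IsBifixCode Y) (hYne : Y.Nonempty) :
    IsMaximalBifixCode X := by
  refine ⟨hXb, ?_⟩
  intro X' hX' hsub
  have hprod : IsBifixCode (ProdL X' Y) :=
    ⟨prefixcode_prod hX'.1 hYb.1, suffixcode_prod hX'.2 hYb.2⟩
  have heq := hmaxXY.2 (ProdL X' Y) hprod (prod_sub hsub)
  refine Set.Subset.antisymm hsub ?_
  intro x' hx'
  obtain ⟨y0, hy0⟩ := hYne
  have hmem : x' ++ y0 ∈ ProdL X Y := by
    rw [heq]; exact ⟨x', hx', y0, hy0, rfl⟩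
  obtain ⟨x1, hx1, y1, hy1, heq2⟩ := hmem
  have h1 : y0 <:+ x1 ++ y1 := by rw [← heq2]; exact suffix_append _ _
  have h2 : y1 <:+ x1 ++ y1 := suffix_append _ _
  have hy01 : y0 = y1 := by
    rcases suffix_or_suffix_of_suffix h1 h2 with h | h
    · exact hYb.2.2 y0 hy0 y1 hy1 h
    · exact (hYb.2.2 y1 hy1 y0 hy0 h).symm
  subst hy01
  have : x' = x1 := append_cancel_right heq2
  rw [this]; exact hx1

lemma max_right_transfer (hmaxXY : IsMaximalBifixCode (ProdL X Y))
    (hXb : IsBifixCode X) (hYb : IsBifixCode Y) (hXne : X.Nonempty) :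
    IsMaximalBifixCode Y := by
  refine ⟨hYb, ?_⟩
  intro Y' hY' hsub
  have hprod : IsBifixCode (ProdL X Y') :=
    ⟨prefixcode_prod hXb.1 hY'.1, suffixcode_prod hXb.2 hY'.2⟩
  have heq := hmaxXY.2 (ProdL X Y') hprod (prod_sub_right hsub)
  refine Set.Subset.antisymm hsub ?_
  intro y' hy'
  obtain ⟨x0, hx0⟩ := hXne
  have hmem : x0 ++ y' ∈ ProdL X Y := by
    rw [heq]; exact ⟨x0, hx0, y', hy', rfl⟩
  obtain ⟨x1, hx1, y1, hy1, heq2⟩ := hmem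
  have h1 : x0 <+: x1 ++ y1 := by rw [← heq2]; exact prefix_append _ _
  have h2 : x1 <+: x1 ++ y1 := prefix_append _ _
  have hx01 : x0 = x1 := by
    rcases prefix_or_prefix_of_prefix h1 h2 with h | h
    · exact hXb.1.2 x0 hx0 x1 hx1 h
    · exact (hXb.1.2 x1 hx1 x0 hx0 h).symm
  subst hx01
  have : y' = y1 := append_cancel_left heq2
  rw [this]; exact hy1

/-- backward transfer of bifixness for part 1 -/
lemma bifix_back {X Y : Set (List A)} (hXe : ([] : List A) ∉ X) (hYe : ([] : List A) ∉ Y)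
    (hXne : X.Nonempty) (hYne : Y.Nonempty)
    (hXYp : IsPrefixCode (ProdL X Y)) (hYXp : IsPrefixCode (ProdL Y X))
    (hXYs : IsSuffixCode (ProdL X Y)) (hYXs : IsSuffixCode (ProdL Y X)) :
    IsBifixCode X ∧ IsBifixCode Y := by
  obtain ⟨x0, hx0⟩ := hXne
  obtain ⟨y0, hy0⟩ := hYne
  refine ⟨⟨⟨hXe, ?_⟩, ⟨hXe, ?_⟩⟩, ⟨⟨hYe, ?_⟩, ⟨hYe, ?_⟩⟩⟩
  · -- X prefix code, from YX prefix code
    intro u hu v hv hpre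
    have := hYXp.2 (y0 ++ u) ⟨y0, hy0, u, hu, rfl⟩ (y0 ++ v) ⟨y0, hy0, v, hv, rfl⟩
      (by rw [prefix_append_right_inj]; exact hpre)
    exact append_cancel_left this
  · -- X suffix code, from XY suffix code
    intro u hu v hv hsuf
    obtain ⟨t, ht⟩ := hsuf
    have hsuf2 : u ++ y0 <:+ v ++ y0 := ⟨t, by rw [← append_assoc, ht]⟩
    have := hXYs.2 (u ++ y0) ⟨u, hu, y0, hy0, rfl⟩ (v ++ y0) ⟨v, hv, y0, hy0, rfl⟩ hsuf2
    exact append_cancel_right this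
  · -- Y prefix code, from XY prefix code
    intro u hu v hv hpre
    have := hXYp.2 (x0 ++ u) ⟨x0, hx0, u, hu, rfl⟩ (x0 ++ v) ⟨x0, hx0, v, hv, rfl⟩
      (by rw [prefix_append_right_inj]; exact hpre)
    exact append_cancel_left this
  · -- Y suffix code, from YX suffix code
    intro u hu v hv hsuf
    obtain ⟨t, ht⟩ := hsuf
    have hsuf2 : u ++ x0 <:+ v ++ x0 := ⟨t, by rw [← append_assoc, ht]⟩
    have := hYXs.2 (u ++ x0) ⟨u, hu, x0, hx0, rfl⟩ (v ++ x0) ⟨v, hv, x0, hx0, rfl⟩ hsuf2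
    exact append_cancel_right this

end S12

/-- `XY` and `YX` are bifix (maximal bifix thin) alt-induced codes if and only if
`X` and `Y` are bifix (resp. maximal bifix thin) codes. -/
theorem stmt12 {A : Type*} [Fintype A] [Nonempty A]
    (X Y : Set (List A)) (hX : X.Nonempty) (hY : Y.Nonempty)
    (hXe : ([] : List A) ∉ X) (hYe : ([] : List A) ∉ Y) :
    ((IsBifixCode (ProdL X Y) ∧ IsAltInduced (ProdL X Y) ∧
      IsBifixCode (ProdL Y X) ∧ IsAltInduced (ProdL Y X)) ↔
      (IsBifixCode X ∧ IsBifixCode Y)) ∧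
    ((IsMaximalBifixCode (ProdL X Y) ∧ IsThin (ProdL X Y) ∧ IsAltInduced (ProdL X Y) ∧
      IsMaximalBifixCode (ProdL Y X) ∧ IsThin (ProdL Y X) ∧ IsAltInduced (ProdL Y X)) ↔
      (IsMaximalBifixCode X ∧ IsThin X ∧ IsMaximalBifixCode Y ∧ IsThin Y)) := by
  constructor
  · -- part 1
    constructor
    · rintro ⟨hXY, _, hYX, _⟩
      exact S12.bifix_back hXe hYe hX hY hXY.1 hYX.1 hXY.2 hYX.2
    · rintro ⟨hXb, hYb⟩
      refine ⟨⟨S12.prefixcode_prod hXb.1 hYb.1, S12.suffixcode_prod hXb.2 hYb.2⟩,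
        ⟨X, Y, S12.altcode_of_prefixcodes hXb.1 hYb.1 hX hY, rfl⟩,
        ⟨S12.prefixcode_prod hYb.1 hXb.1, S12.suffixcode_prod hYb.2 hXb.2⟩,
        ⟨Y, X, S12.altcode_of_prefixcodes hYb.1 hXb.1 hY hX, rfl⟩⟩
  · -- part 2
    constructor
    · rintro ⟨hXYmax, hXYthin, _, hYXmax, hYXthin, _⟩
      obtain ⟨hXb, hYb⟩ := S12.bifix_back hXe hYe hX hY hXYmax.1.1 hYXmax.1.1
        hXYmax.1.2 hYXmax.1.2
      exact ⟨S12.max_left_transfer hXYmax hXb hYb hY,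
        S12.thin_left_of_prod hXYthin hY,
        S12.max_right_transfer hXYmax hXb hYb hX,
        S12.thin_right_of_prod hXYthin hX⟩
    · rintro ⟨hXmax, hXthin, hYmax, hYthin⟩
      have hXb := hXmax.1
      have hYb := hYmax.1
      have hXmp := S12.maxpref_of_thin_maxbifix hXmax hXthin hX
      have hYmp := S12.maxpref_of_thin_maxbifix hYmax hYthin hY
      have hXYmp := S12.maxpref_prod hXmp hYmp hX hY
      have hYXmp := S12.maxpref_prod hYmp hXmp hY hX
      refine ⟨⟨⟨S12.prefixcode_prod hXb.1 hYb.1, S12.suffixcode_prod hXb.2 hYb.2⟩, ?_⟩,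
        S12.thin_prod hXthin hYthin hX hY,
        ⟨X, Y, S12.altcode_of_prefixcodes hXb.1 hYb.1 hX hY, rfl⟩,
        ⟨⟨S12.prefixcode_prod hYb.1 hXb.1, S12.suffixcode_prod hYb.2 hXb.2⟩, ?_⟩,
        S12.thin_prod hYthin hXthin hY hX,
        ⟨Y, X, S12.altcode_of_prefixcodes hYb.1 hXb.1 hY hX, rfl⟩⟩
      · intro Z hZ hsub
        exact hXYmp.2 Z hZ.1 hsub
      · intro Z hZ hsub
        exact hYXmp.2 Z hZ.1 hsub
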